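/- If ρ ∈ (−1,0), then the bivariate Gaussian copula satisfies C_ρ(u,v) < uv for all u, v ∈ (0,1). -/

import Mathlib

open MeasureTheory Set Real

/-- The standard normal cumulative distribution function. -/
noncomputable def stdNormalCDF (w : ℝ) : ℝ :=
  ∫ x in Set.Iic w, (Real.sqrt (2 * Real.pi))⁻¹ * Real.exp (-x ^ 2 / 2)

/-- The bivariate standard normal distribution function with correlation ρ. -/
noncomputable def biNormalCDF (ρ s t : ℝ) : ℝ :=
  ∫ x in Set.Iic s, ∫ y in Set.Iic t,
    (2 * Real.pi * Real.sqrt (1 - ρ ^ 2))⁻¹ *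
      Real.exp (-(x ^ 2 - 2 * ρ * x * y + y ^ 2) / (2 * (1 - ρ ^ 2)))

noncomputable def phi (x : ℝ) : ℝ := (Real.sqrt (2 * Real.pi))⁻¹ * Real.exp (-x ^ 2 / 2)

lemma phi_cont : Continuous phi := by
  unfold phi; fun_prop

lemma phi_pos (x : ℝ) : 0 < phi x := by
  unfold phi
  positivity

lemma phi_integrable : Integrable phi := by
  have h : Integrable (fun x : ℝ => Real.exp (-(1/2) * x ^ 2)) := integrable_exp_neg_mul_sq (by norm_num)
  have := h.const_mul (Real.sqrt (2 * Real.pi))⁻¹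
  convert this using 2 with x
  unfold phi
  ring_nf

lemma phi_integral : ∫ x : ℝ, phi x = 1 := by
  unfold phi
  rw [MeasureTheory.integral_const_mul]
  have h : ∫ x : ℝ, Real.exp (-(1/2) * x ^ 2) = Real.sqrt (Real.pi / (1/2)) :=
    integral_gaussian (1/2)
  have h2 : ∫ x : ℝ, Real.exp (-x ^ 2 / 2) = Real.sqrt (2 * Real.pi) := by
    rw [show (2 * Real.pi) = Real.pi / (1/2) by ring, ← h]
    congr 1 with x; ring_nf
  rw [h2, inv_mul_cancel₀]
  positivity

lemma stdNormalCDF_eq (w : ℝ) : stdNormalCDF w = ∫ x in Set.Iic w, phi x := rfl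

/-- full-line translation+scaling substitution -/
lemma integral_phi_affine {σ : ℝ} (hσ : 0 < σ) (c : ℝ) :
    ∫ y : ℝ, phi ((y - c) / σ) = σ := by
  have h1 : ∫ y : ℝ, phi ((y - c) / σ) = ∫ z : ℝ, phi (z / σ) := by
    have := MeasureTheory.integral_add_right_eq_self (μ := volume)
      (fun y : ℝ => phi ((y - c) / σ)) c
    rw [← this]
    simp
  rw [h1, MeasureTheory.Measure.integral_comp_div phi σ, phi_integral, abs_of_pos hσ, smul_eq_mul, mul_one]

/-- Iic substitution -/
lemma setIntegral_phi_affine {σ : ℝ} (hσ : 0 < σ) (c t : ℝ) :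
    ∫ y in Set.Iic t, phi ((y - c) / σ) = σ * stdNormalCDF ((t - c) / σ) := by
  have e1 : ∫ y in Set.Iic t, phi ((y - c) / σ)
      = ∫ y : ℝ, (Set.Iic t).indicator (fun y => phi ((y - c) / σ)) y := by
    rw [MeasureTheory.integral_indicator measurableSet_Iic]
  have e2 : ∀ z : ℝ, (Set.Iic t).indicator (fun y => phi ((y - c) / σ)) (z + c)
      = (Set.Iic (t - c)).indicator (fun z => phi (z / σ)) z := by
    intro z
    by_cases h : z ≤ t - c
    · rw [Set.indicator_of_mem (by simp only [Set.mem_Iic]; linarith),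
        Set.indicator_of_mem (by simpa using h)]
      simp
    · rw [Set.indicator_of_notMem (by simp only [Set.mem_Iic, not_le] at h ⊢; linarith),
        Set.indicator_of_notMem (by simpa using h)]
  have e3 : ∀ z : ℝ, (Set.Iic (t - c)).indicator (fun z => phi (z / σ)) z
      = (Set.Iic ((t - c) / σ)).indicator phi (z / σ) := by
    intro z
    by_cases h : z ≤ t - c
    · rw [Set.indicator_of_mem (by simpa using h),
        Set.indicator_of_mem (by simp only [Set.mem_Iic]; exact (div_le_div_iff_of_pos_right hσ).mpr h)]
    · rw [Set.indicator_of_notMem (by simpa using h), Set.indicator_of_notMem]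
      simp only [Set.mem_Iic, not_le] at h ⊢
      exact (div_lt_div_iff_of_pos_right hσ).mpr h
  rw [e1]
  rw [← MeasureTheory.integral_add_right_eq_self (μ := volume)
      ((Set.Iic t).indicator (fun y => phi ((y - c) / σ))) c]
  simp_rw [e2, e3]
  rw [MeasureTheory.Measure.integral_comp_div ((Set.Iic ((t - c) / σ)).indicator phi) σ,
    abs_of_pos hσ, smul_eq_mul, MeasureTheory.integral_indicator measurableSet_Iic]
  rfl

lemma phi_comp_affine_integrable {σ : ℝ} (hσ : 0 < σ) (c : ℝ) :
    Integrable (fun y : ℝ => phi ((y - c) / σ)) := by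
  have h1 : Integrable (fun w : ℝ => phi (w - c / σ)) := phi_integrable.comp_sub_right (c / σ)
  have h2 := h1.comp_div hσ.ne'
  convert h2 using 2 with y
  ring_nf

lemma setIntegral_phi_pos {s : Set ℝ} (hs : MeasurableSet s) (hpos : 0 < volume s) :
    0 < ∫ x in s, phi x := by
  rw [setIntegral_pos_iff_support_of_nonneg_ae]
  · have : Function.support phi ∩ s = s := by
      rw [Set.inter_eq_right]
      intro x _
      exact (phi_pos x).ne'
    rwa [this]
  · exact Filter.Eventually.of_forall fun x => (phi_pos x).le
  · exact phi_integrable.integrableOn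

lemma stdNormalCDF_pos (w : ℝ) : 0 < stdNormalCDF w := by
  rw [stdNormalCDF_eq]
  exact setIntegral_phi_pos measurableSet_Iic (by simp)

lemma stdNormalCDF_strictMono : StrictMono stdNormalCDF := by
  intro a b hab
  rw [stdNormalCDF_eq, stdNormalCDF_eq, ← Set.Iic_union_Ioc_eq_Iic hab.le,
    setIntegral_union (Set.Iic_disjoint_Ioc le_rfl) measurableSet_Ioc
      phi_integrable.integrableOn phi_integrable.integrableOn]
  have : 0 < ∫ x in Set.Ioc a b, phi x :=
    setIntegral_phi_pos measurableSet_Ioc (by simp [hab])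
  linarith

lemma stdNormalCDF_lt_one (w : ℝ) : stdNormalCDF w < 1 := by
  have h1 : (1 : ℝ) = ∫ x : ℝ, phi x := phi_integral.symm
  have h2 : ∫ x : ℝ, phi x = stdNormalCDF w + ∫ x in Set.Ioi w, phi x := by
    rw [stdNormalCDF_eq, ← setIntegral_union (Set.Iic_disjoint_Ioi le_rfl) measurableSet_Ioi
      phi_integrable.integrableOn phi_integrable.integrableOn, Set.Iic_union_Ioi,
      setIntegral_univ]
  have h3 : 0 < ∫ x in Set.Ioi w, phi x :=
    setIntegral_phi_pos measurableSet_Ioi (by simp)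
  linarith

section Density

variable {ρ : ℝ} (hρ2 : ρ ^ 2 < 1)

noncomputable def biDen (ρ x y : ℝ) : ℝ :=
  (2 * Real.pi * Real.sqrt (1 - ρ ^ 2))⁻¹ *
    Real.exp (-(x ^ 2 - 2 * ρ * x * y + y ^ 2) / (2 * (1 - ρ ^ 2)))

lemma biDen_symm (ρ x y : ℝ) : biDen ρ x y = biDen ρ y x := by
  unfold biDen; ring_nf

include hρ2 in
lemma biDen_eq (x y : ℝ) :
    biDen ρ x y = phi x * ((Real.sqrt (1 - ρ ^ 2))⁻¹ *
      phi ((y - ρ * x) / Real.sqrt (1 - ρ ^ 2))) := by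
  have h1 : (0:ℝ) < 1 - ρ ^ 2 := by linarith
  set σ := Real.sqrt (1 - ρ ^ 2) with hσdef
  have hσ : 0 < σ := Real.sqrt_pos.mpr h1
  have hσ2 : σ ^ 2 = 1 - ρ ^ 2 := Real.sq_sqrt h1.le
  have hsqrt2pi : (0:ℝ) < Real.sqrt (2 * Real.pi) := by positivity
  have hc : Real.sqrt (2 * Real.pi) * Real.sqrt (2 * Real.pi) = 2 * Real.pi :=
    Real.mul_self_sqrt (by positivity)
  unfold biDen phi
  have hexp : -x ^ 2 / 2 + -((y - ρ * x) / σ) ^ 2 / 2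
      = -(x ^ 2 - 2 * ρ * x * y + y ^ 2) / (2 * (1 - ρ ^ 2)) := by
    rw [div_pow, hσ2]
    field_simp
    ring
  have key : (Real.sqrt (2 * Real.pi))⁻¹ * Real.exp (-x ^ 2 / 2) *
      (σ⁻¹ * ((Real.sqrt (2 * Real.pi))⁻¹ * Real.exp (-((y - ρ * x) / σ) ^ 2 / 2)))
      = (2 * Real.pi * σ)⁻¹ * Real.exp (-x ^ 2 / 2 + -((y - ρ * x) / σ) ^ 2 / 2) := by
    rw [Real.exp_add]
    field_simp
    ring_nf
    rw [Real.sq_sqrt (by positivity : (0:ℝ) ≤ π * 2)]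
  rw [key, hexp]

include hρ2 in
lemma biDen_inner (x t : ℝ) :
    ∫ y in Set.Iic t, biDen ρ x y
      = phi x * stdNormalCDF ((t - ρ * x) / Real.sqrt (1 - ρ ^ 2)) := by
  have h1 : (0:ℝ) < 1 - ρ ^ 2 := by linarith
  set σ := Real.sqrt (1 - ρ ^ 2) with hσdef
  have hσ : 0 < σ := Real.sqrt_pos.mpr h1
  rw [setIntegral_congr_fun measurableSet_Iic (fun y _ => biDen_eq hρ2 x y)]
  rw [integral_const_mul, integral_const_mul, setIntegral_phi_affine hσ]
  field_simp
  rfl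

include hρ2 in
lemma biDen_integrable_left (y : ℝ) : Integrable (fun x => biDen ρ x y) := by
  have h1 : (0:ℝ) < 1 - ρ ^ 2 := by linarith
  have hσ : 0 < Real.sqrt (1 - ρ ^ 2) := Real.sqrt_pos.mpr h1
  have : (fun x => biDen ρ x y) = fun x => phi y * ((Real.sqrt (1 - ρ ^ 2))⁻¹ *
      phi ((x - ρ * y) / Real.sqrt (1 - ρ ^ 2))) := by
    funext x
    rw [biDen_symm, biDen_eq hρ2]
  rw [this]
  exact ((phi_comp_affine_integrable hσ (ρ * y)).const_mul _).const_mul _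

include hρ2 in
lemma biDen_marginal (y : ℝ) : ∫ x : ℝ, biDen ρ x y = phi y := by
  have h1 : (0:ℝ) < 1 - ρ ^ 2 := by linarith
  set σ := Real.sqrt (1 - ρ ^ 2) with hσdef
  have hσ : 0 < σ := Real.sqrt_pos.mpr h1
  have e : ∀ x, biDen ρ x y = phi y * (σ⁻¹ * phi ((x - ρ * y) / σ)) := fun x => by
    rw [biDen_symm, biDen_eq hρ2]
  simp_rw [e]
  rw [integral_const_mul, integral_const_mul, integral_phi_affine hσ]
  field_simp

end Density

lemma integral_phi_Ioi (w : ℝ) : ∫ x in Set.Ioi w, phi x = 1 - stdNormalCDF w := by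
  have h2 : ∫ x : ℝ, phi x = stdNormalCDF w + ∫ x in Set.Ioi w, phi x := by
    rw [stdNormalCDF_eq, ← setIntegral_union (Set.Iic_disjoint_Ioi le_rfl) measurableSet_Ioi
      phi_integrable.integrableOn phi_integrable.integrableOn, Set.Iic_union_Ioi,
      setIntegral_univ]
  rw [phi_integral] at h2
  linarith

lemma phiG_integrable {G : ℝ → ℝ} (hmeas : Measurable G) (h0 : ∀ x, 0 ≤ G x)
    (h1 : ∀ x, G x ≤ 1) : Integrable (fun x => phi x * G x) := by
  refine phi_integrable.mono ((phi_cont.measurable.mul hmeas).aestronglyMeasurable)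
    (Filter.Eventually.of_forall fun x => ?_)
  rw [Real.norm_eq_abs, Real.norm_eq_abs, abs_of_nonneg (mul_nonneg (phi_pos x).le (h0 x)),
    abs_of_nonneg (phi_pos x).le]
  calc phi x * G x ≤ phi x * 1 := by
        exact mul_le_mul_of_nonneg_left (h1 x) (phi_pos x).le
    _ = phi x := mul_one _

lemma phiG_total {ρ : ℝ} (hρ2 : ρ ^ 2 < 1) (t : ℝ) :
    ∫ x : ℝ, phi x * stdNormalCDF ((t - ρ * x) / Real.sqrt (1 - ρ ^ 2)) = stdNormalCDF t := by
  have h1 : (0:ℝ) < 1 - ρ ^ 2 := by linarith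
  have hσ : 0 < Real.sqrt (1 - ρ ^ 2) := Real.sqrt_pos.mpr h1
  set F : ℝ × ℝ → ℝ := (Set.univ ×ˢ Set.Iic t).indicator (fun p => biDen ρ p.1 p.2) with hF
  have hden_nonneg : ∀ x y : ℝ, 0 ≤ biDen ρ x y := by
    intro x y
    rw [biDen_eq hρ2]
    have := phi_pos x
    have := phi_pos ((y - ρ * x) / Real.sqrt (1 - ρ ^ 2))
    have : (0:ℝ) < Real.sqrt (1 - ρ ^ 2) := Real.sqrt_pos.mpr h1
    positivity
  have hF_nonneg : ∀ p : ℝ × ℝ, 0 ≤ F p :=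
    fun p => Set.indicator_nonneg (fun q _ => hden_nonneg q.1 q.2) p
  have hden_cont : Continuous (fun p : ℝ × ℝ => biDen ρ p.1 p.2) := by
    unfold biDen; fun_prop
  have hFmeas : AEStronglyMeasurable F (volume.prod volume) :=
    (hden_cont.stronglyMeasurable.indicator
      (MeasurableSet.univ.prod measurableSet_Iic)).aestronglyMeasurable
  have hFx : ∀ x : ℝ, (fun y => F (x, y)) = (Set.Iic t).indicator (fun y => biDen ρ x y) := by
    intro x; funext y
    by_cases h : y ∈ Set.Iic t
    · rw [Set.indicator_of_mem h, hF, Set.indicator_of_mem (by simp [h])]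
    · rw [Set.indicator_of_notMem h, hF, Set.indicator_of_notMem (by simp [h])]
  have hint_x : ∀ x : ℝ, Integrable (fun y => F (x, y)) := by
    intro x
    rw [hFx]
    refine Integrable.indicator ?_ measurableSet_Iic
    have h : (fun y => biDen ρ x y) = fun y => phi x * ((Real.sqrt (1 - ρ ^ 2))⁻¹ *
        phi ((y - ρ * x) / Real.sqrt (1 - ρ ^ 2))) := funext fun y => biDen_eq hρ2 x y
    rw [h]
    exact ((phi_comp_affine_integrable hσ (ρ * x)).const_mul _).const_mul _
  have hinner : ∀ x : ℝ,
      ∫ y, F (x, y) = phi x * stdNormalCDF ((t - ρ * x) / Real.sqrt (1 - ρ ^ 2)) := by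
    intro x
    rw [hFx, integral_indicator measurableSet_Iic, biDen_inner hρ2]
  have hFint : Integrable F (volume.prod volume) := by
    rw [integrable_prod_iff hFmeas]
    refine ⟨Filter.Eventually.of_forall hint_x, ?_⟩
    have heq : (fun x => ∫ y, ‖F (x, y)‖)
        = fun x => phi x * stdNormalCDF ((t - ρ * x) / Real.sqrt (1 - ρ ^ 2)) := by
      funext x
      rw [← hinner x]
      congr 1 with y
      exact Real.norm_of_nonneg (hF_nonneg _)
    rw [heq]
    exact phiG_integrable
      (stdNormalCDF_strictMono.monotone.measurable.comp (by fun_prop))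
      (fun x => (stdNormalCDF_pos _).le) (fun x => (stdNormalCDF_lt_one _).le)
  have houter : ∀ y : ℝ, ∫ x, F (x, y) = (Set.Iic t).indicator phi y := by
    intro y
    by_cases h : y ∈ Set.Iic t
    · have : (fun x => F (x, y)) = fun x => biDen ρ x y := by
        funext x; rw [hF, Set.indicator_of_mem (by simp [h])]
      rw [this, biDen_marginal hρ2, Set.indicator_of_mem h]
    · have : (fun x => F (x, y)) = fun _ => (0:ℝ) := by
        funext x; rw [hF, Set.indicator_of_notMem (by simp [h])]
      rw [this, integral_const, smul_zero, Set.indicator_of_notMem h]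
  calc ∫ x : ℝ, phi x * stdNormalCDF ((t - ρ * x) / Real.sqrt (1 - ρ ^ 2))
      = ∫ x : ℝ, ∫ y : ℝ, F (x, y) := by simp_rw [hinner]
    _ = ∫ y : ℝ, ∫ x : ℝ, F (x, y) := integral_integral_swap hFint
    _ = ∫ y : ℝ, (Set.Iic t).indicator phi y := by simp_rw [houter]
    _ = stdNormalCDF t := by rw [integral_indicator measurableSet_Iic, stdNormalCDF_eq]

theorem stmt12 (ρ : ℝ) (hρ : ρ ∈ Set.Ioo (-1 : ℝ) 0) (Φinv : ℝ → ℝ)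
    (hinv₁ : ∀ p ∈ Set.Ioo (0 : ℝ) 1, stdNormalCDF (Φinv p) = p)
    (hinv₂ : ∀ w : ℝ, Φinv (stdNormalCDF w) = w)
    (u v : ℝ) (hu : u ∈ Set.Ioo (0 : ℝ) 1) (hv : v ∈ Set.Ioo (0 : ℝ) 1) :
    biNormalCDF ρ (Φinv u) (Φinv v) < u * v := by
  obtain ⟨hρl, hρr⟩ := hρ
  obtain ⟨hu0, hu1⟩ := hu
  obtain ⟨hv0, hv1⟩ := hv
  have hρ2 : ρ ^ 2 < 1 := by nlinarith
  have h1 : (0:ℝ) < 1 - ρ ^ 2 := by linarith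
  set σ : ℝ := Real.sqrt (1 - ρ ^ 2) with hσdef
  have hσ : 0 < σ := Real.sqrt_pos.mpr h1
  set s : ℝ := Φinv u with hs
  set t : ℝ := Φinv v with ht
  have hCs : stdNormalCDF s = u := hinv₁ u ⟨hu0, hu1⟩
  have hCt : stdNormalCDF t = v := hinv₁ v ⟨hv0, hv1⟩
  set G : ℝ → ℝ := fun x => stdNormalCDF ((t - ρ * x) / σ) with hG
  have hGmono : StrictMono G := by
    intro a b hab
    apply stdNormalCDF_strictMono
    have h : t - ρ * a < t - ρ * b := by nlinarith
    exact (div_lt_div_iff_of_pos_right hσ).mpr h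
  have hGmeas : Measurable G :=
    stdNormalCDF_strictMono.monotone.measurable.comp (by fun_prop)
  have hG0 : ∀ x, 0 < G x := fun x => stdNormalCDF_pos _
  have hG1 : ∀ x, G x < 1 := fun x => stdNormalCDF_lt_one _
  have hphiG_int : Integrable (fun x => phi x * G x) :=
    phiG_integrable hGmeas (fun x => (hG0 x).le) (fun x => (hG1 x).le)
  have hbi : biNormalCDF ρ s t = ∫ x in Set.Iic s, phi x * G x := by
    have : biNormalCDF ρ s t = ∫ x in Set.Iic s, ∫ y in Set.Iic t, biDen ρ x y := rfl
    rw [this, setIntegral_congr_fun measurableSet_Iic (fun x _ => biDen_inner hρ2 x t)]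
  set A : ℝ := ∫ x in Set.Iic s, phi x * G x with hA
  set B : ℝ := ∫ x in Set.Ioi s, phi x * G x with hB
  have hAB : A + B = v := by
    rw [hA, hB, ← setIntegral_union (Set.Iic_disjoint_Ioi le_rfl) measurableSet_Ioi
      hphiG_int.integrableOn hphiG_int.integrableOn, Set.Iic_union_Ioi, setIntegral_univ]
    rw [hG] at *
    exact (phiG_total hρ2 t).trans hCt
  -- A < G s * u
  have hint2 : IntegrableOn (fun x => phi x * (G s - G x)) (Set.Iic s) := by
    have he : (fun x => phi x * (G s - G x)) = fun x => phi x * G s - phi x * G x := by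
      funext x; ring
    rw [he]
    exact ((phi_integrable.mul_const (G s)).sub hphiG_int).integrableOn
  have hposA : 0 < ∫ x in Set.Iic s, phi x * (G s - G x) := by
    refine (setIntegral_pos_iff_support_of_nonneg_ae ?_ hint2).mpr ?_
    · refine (ae_restrict_iff' measurableSet_Iic).mpr (Filter.Eventually.of_forall fun x hx => ?_)
      exact mul_nonneg (phi_pos x).le (sub_nonneg.mpr (hGmono.monotone hx))
    · refine lt_of_lt_of_le ?_ (measure_mono (?_ : Set.Iio s ⊆ _))
      · simp [Real.volume_Iio]
      · intro x hx
        have hx' : x < s := hx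
        exact ⟨(mul_pos (phi_pos x) (sub_pos.mpr (hGmono hx'))).ne', hx'.le⟩
  have hA_lt : A < G s * u := by
    have he : ∫ x in Set.Iic s, phi x * (G s - G x)
        = (∫ x in Set.Iic s, phi x) * G s - A := by
      have he2 : (fun x => phi x * (G s - G x)) = fun x => phi x * G s - phi x * G x := by
        funext x; ring
      rw [hA, he2, integral_sub ((phi_integrable.mul_const (G s)).integrableOn)
        hphiG_int.integrableOn, integral_mul_const]
    rw [he, ← stdNormalCDF_eq, hCs] at hposA
    linarith
  -- B side
  have hint3 : IntegrableOn (fun x => phi x * (G x - G s)) (Set.Ioi s) := by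
    have he : (fun x => phi x * (G x - G s)) = fun x => phi x * G x - phi x * G s := by
      funext x; ring
    rw [he]
    exact (hphiG_int.sub (phi_integrable.mul_const (G s))).integrableOn
  have hposB : 0 < ∫ x in Set.Ioi s, phi x * (G x - G s) := by
    refine (setIntegral_pos_iff_support_of_nonneg_ae ?_ hint3).mpr ?_
    · refine (ae_restrict_iff' measurableSet_Ioi).mpr (Filter.Eventually.of_forall fun x hx => ?_)
      exact mul_nonneg (phi_pos x).le (sub_nonneg.mpr (hGmono.monotone (le_of_lt hx)))
    · refine lt_of_lt_of_le ?_ (measure_mono (?_ : Set.Ioi s ⊆ _))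
      · simp [Real.volume_Ioi]
      · intro x hx
        exact ⟨(mul_pos (phi_pos x) (sub_pos.mpr (hGmono hx))).ne', hx⟩
  have hB_gt : G s * (1 - u) < B := by
    have he : ∫ x in Set.Ioi s, phi x * (G x - G s)
        = B - (∫ x in Set.Ioi s, phi x) * G s := by
      have he2 : (fun x => phi x * (G x - G s)) = fun x => phi x * G x - phi x * G s := by
        funext x; ring
      rw [hB, he2, integral_sub hphiG_int.integrableOn
        ((phi_integrable.mul_const (G s)).integrableOn), integral_mul_const]
    rw [he, integral_phi_Ioi, hCs] at hposB
    linarith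
  rw [hbi]
  nlinarith [hG0 s, hG1 s]
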